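/- Let W be a basic localizer on Cat. If f: I₁ → I₂ is a functor in W and E is any small category, then the functor f × id_E : I₁ × E → I₂ × E is in W. -/

import Mathlib

open CategoryTheory CategoryTheory.Limits

universe u

/-- A class of morphisms is weakly saturated if it contains identities,
satisfies 2-out-of-3, and satisfies (WS3). -/
structure IsWeaklySaturated {C : Type*} [Category C] (W : MorphismProperty C) : Prop where
  id_mem : ∀ X : C, W (𝟙 X)
  comp_mem : ∀ ⦃X Y Z : C⦄ (f : X ⟶ Y) (g : Y ⟶ Z), W f → W g → W (f ≫ g)
  of_comp_left : ∀ ⦃X Y Z : C⦄ (f : X ⟶ Y) (g : Y ⟶ Z), W f → W (f ≫ g) → W g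
  of_comp_right : ∀ ⦃X Y Z : C⦄ (f : X ⟶ Y) (g : Y ⟶ Z), W g → W (f ≫ g) → W f
  ws3 : ∀ ⦃X Y : C⦄ (p : Y ⟶ X) (s : X ⟶ Y), s ≫ p = 𝟙 X → W (p ≫ s) → W p

/-- The terminal category, as an object of `Cat`. -/
abbrev Cat.pt : Cat.{u, u} := Cat.of (Discrete PUnit.{u + 1})

/-- A basic localizer (Grothendieck's « localisateur fondamental ») on `Cat`:
(L1) weak saturation, (L2) categories with a terminal object are aspherical,
(L3) locality over a base via comma categories. -/
structure IsBasicLocalizer (W : MorphismProperty Cat.{u, u}) : Prop where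
  weaklySaturated : IsWeaklySaturated W
  terminal : ∀ (I : Cat.{u, u}) [HasTerminal I],
    W (X := I) (Y := Cat.pt.{u}) (Functor.star I).toCatHom
  locality : ∀ ⦃I J K : Cat.{u, u}⦄ (w : I ⟶ J) (v : J ⟶ K),
    (∀ k : K,
      W (X := Cat.of (Comma (w.toFunctor ⋙ v.toFunctor) (Functor.fromPUnit.{u} k)))
        (Y := Cat.of (Comma v.toFunctor (Functor.fromPUnit.{u} k)))
        (Comma.preLeft w.toFunctor v.toFunctor (Functor.fromPUnit.{u} k)).toCatHom) →
    W w

/-- Isomorphisms of `Cat` belong to any weakly saturated class. -/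
lemma IsWeaklySaturated.iso_mem {W : MorphismProperty Cat.{u, u}}
    (hW : IsWeaklySaturated W) {X Y : Cat.{u, u}} (e : X ≅ Y) : W e.hom :=
  hW.ws3 e.hom e.inv e.inv_hom_id (by rw [e.hom_inv_id]; exact hW.id_mem X)

/-- Any functor between categories with terminal objects is in a basic localizer. -/
lemma IsBasicLocalizer.mem_of_terminal {W : MorphismProperty Cat.{u, u}}
    (hW : IsBasicLocalizer W) {X Y : Cat.{u, u}} [HasTerminal ↥X] [HasTerminal ↥Y]
    (g : X ⟶ Y) : W g := by
  refine hW.weaklySaturated.of_comp_right g (Functor.star ↥Y).toCatHom (hW.terminal Y) ?_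
  have : (g ≫ (Functor.star ↥Y).toCatHom : X ⟶ Cat.pt.{u}) = (Functor.star ↥X).toCatHom :=
    Cat.Hom.ext (Functor.punit_ext' _ _)
  rw [this]
  exact hW.terminal X

/-- The comma category of the first projection over `a` has a terminal object
when `C` has one. -/
noncomputable def commaFstTerminal (A C : Type u) [Category.{u} A] [Category.{u} C]
    [HasTerminal C] (a : A) :
    IsTerminal (⟨(a, ⊤_ C), ⟨⟨⟩⟩, 𝟙 a⟩ :
      Comma (CategoryTheory.Prod.fst A C ⋙ 𝟭 A) (Functor.fromPUnit.{u} a)) := by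
  refine IsTerminal.ofUniqueHom (fun X => ⟨(X.hom, terminal.from X.left.2), 𝟙 _, by simp⟩) ?_
  intro X m
  have h1 : m.left.1 = X.hom := by simpa using m.w
  apply CommaMorphism.ext
  · apply Prod.ext h1 (terminal.hom_ext _ _)
  · apply Subsingleton.elim

/-- `Comma (𝟭 A) (Functor.fromPUnit a)` (i.e. `Over a`) has a terminal object. -/
noncomputable def overTerminal' (A : Type u) [Category.{u} A] (a : A) :
    IsTerminal (⟨a, ⟨⟨⟩⟩, 𝟙 a⟩ : Comma (𝟭 A) (Functor.fromPUnit.{u} a)) := by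
  refine IsTerminal.ofUniqueHom (fun X => ⟨X.hom, 𝟙 _, by simp⟩) ?_
  intro X m
  apply CommaMorphism.ext
  · simpa using m.w
  · apply Subsingleton.elim

/-- If `C` has a terminal object, the first projection `A × C ⥤ A` is in `W`. -/
lemma IsBasicLocalizer.prodFst_mem {W : MorphismProperty Cat.{u, u}}
    (hW : IsBasicLocalizer W) (A C : Cat.{u, u}) [HasTerminal ↥C] :
    W (X := Cat.of (↥A × ↥C)) (Y := A) (CategoryTheory.Prod.fst ↥A ↥C).toCatHom := by
  refine hW.locality (I := Cat.of (↥A × ↥C)) (J := A) (K := A)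
    (CategoryTheory.Prod.fst ↥A ↥C).toCatHom (𝟙 A) (fun a => ?_)
  exact @IsBasicLocalizer.mem_of_terminal _ hW _ _
    ((commaFstTerminal ↥A ↥C a).hasTerminal)
    ((overTerminal' ↥A a).hasTerminal) _

/-- Product with a category having a terminal object. -/
lemma IsBasicLocalizer.prod_mem_of_terminal {W : MorphismProperty Cat.{u, u}}
    (hW : IsBasicLocalizer W) {A B : Cat.{u, u}} (g : A ⟶ B) (hg : W g)
    (C : Cat.{u, u}) [HasTerminal ↥C] :
    W (X := Cat.of (↥A × ↥C)) (Y := Cat.of (↥B × ↥C))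
      (Functor.prod g.toFunctor (𝟭 ↥C)).toCatHom := by
  refine hW.weaklySaturated.of_comp_right
    (X := Cat.of (↥A × ↥C)) (Y := Cat.of (↥B × ↥C)) (Z := B)
    (Functor.prod g.toFunctor (𝟭 ↥C)).toCatHom (CategoryTheory.Prod.fst ↥B ↥C).toCatHom
    (hW.prodFst_mem B C) ?_
  exact hW.weaklySaturated.comp_mem (X := Cat.of (↥A × ↥C)) (Y := A) (Z := B)
    (CategoryTheory.Prod.fst ↥A ↥C).toCatHom g (hW.prodFst_mem A C) hg

/-- The comma category of the second projection over `e`, compared with `B × Over e`. -/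
@[simps]
def sndCommaFwd (B E : Type u) [Category.{u} B] [Category.{u} E] (e : E) :
    Comma (CategoryTheory.Prod.snd B E) (Functor.fromPUnit.{u} e) ⥤ B × Over e where
  obj X := (X.left.1, Over.mk X.hom)
  map {X Y} φ := (φ.left.1, Over.homMk φ.left.2 (by simpa using φ.w))

/-- Inverse to `sndCommaFwd`. -/
@[simps]
def sndCommaBwd (B E : Type u) [Category.{u} B] [Category.{u} E] (e : E) :
    B × Over e ⥤ Comma (CategoryTheory.Prod.snd B E) (Functor.fromPUnit.{u} e) where
  obj X := ⟨(X.1, X.2.left), ⟨⟨⟩⟩, X.2.hom⟩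
  map φ := ⟨(φ.1, φ.2.left), 𝟙 _, by simp⟩

/-- The isomorphism of categories, in `Cat`. -/
def sndCommaIso (B E : Cat.{u, u}) (e : E) :
    Cat.of (Comma (CategoryTheory.Prod.snd ↥B ↥E) (Functor.fromPUnit.{u} e)) ≅
      Cat.of (↥B × Over e) where
  hom := (sndCommaFwd ↥B ↥E e).toCatHom
  inv := (sndCommaBwd ↥B ↥E e).toCatHom
  hom_inv_id := rfl
  inv_hom_id := rfl

/-- A basic localizer is stable under taking products with a fixed category:
if `f : I₁ ⟶ I₂` is in `W` and `E` is any small category, then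
`f × id_E : I₁ × E ⟶ I₂ × E` is in `W`. -/
theorem IsBasicLocalizer.prod_mem {W : MorphismProperty Cat.{u, u}}
    (hW : IsBasicLocalizer W) {I₁ I₂ : Cat.{u, u}} (f : I₁ ⟶ I₂) (hf : W f)
    (E : Cat.{u, u}) :
    W (X := Cat.of (↥I₁ × ↥E)) (Y := Cat.of (↥I₂ × ↥E))
      (Functor.prod f.toFunctor (𝟭 ↥E)).toCatHom := by
  refine hW.locality (I := Cat.of (↥I₁ × ↥E)) (J := Cat.of (↥I₂ × ↥E)) (K := E)
    (Functor.prod f.toFunctor (𝟭 ↥E)).toCatHom (CategoryTheory.Prod.snd ↥I₂ ↥E).toCatHom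
    (fun e => ?_)
  have key : Comma.preLeft (Functor.prod f.toFunctor (𝟭 ↥E))
        (CategoryTheory.Prod.snd ↥I₂ ↥E) (Functor.fromPUnit.{u} e)
      = sndCommaFwd ↥I₁ ↥E e ⋙
          (Functor.prod f.toFunctor (𝟭 (Over e))) ⋙ sndCommaBwd ↥I₂ ↥E e := rfl
  show W (X := Cat.of (Comma (CategoryTheory.Prod.snd ↥I₁ ↥E) (Functor.fromPUnit.{u} e)))
    (Y := Cat.of (Comma (CategoryTheory.Prod.snd ↥I₂ ↥E) (Functor.fromPUnit.{u} e)))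
    ((sndCommaIso I₁ E e).hom ≫
      ((Functor.prod f.toFunctor (𝟭 (Over e))).toCatHom :
        Cat.of (↥I₁ × Over e) ⟶ Cat.of (↥I₂ × Over e)) ≫ (sndCommaIso I₂ E e).inv)
  refine hW.weaklySaturated.comp_mem _ _ (hW.weaklySaturated.iso_mem (sndCommaIso I₁ E e)) ?_
  refine hW.weaklySaturated.comp_mem _ _ ?_
    (hW.weaklySaturated.iso_mem (sndCommaIso I₂ E e).symm)
  exact @IsBasicLocalizer.prod_mem_of_terminal _ hW _ _ f hf (Cat.of (Over e))
    ((Over.mkIdTerminal (X := e)).hasTerminal)
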